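/- arXiv:2309.02515 — 2 statements merged into one kernel-verified Lean document; each statement's English description precedes it below -/
import Mathlib

section
/- Let N be a quantum channel with d-dimensional input and output and {U(g)}_{g∈G} a finite family of unitary channels. Then (1/|G|) Σ_{g∈G} ‖(id ⊗ [U(g), N])(Φ^d)‖₂² = (2/d²) Tr[SWAP (N⊗N)(SWAP)] − (2/d²) Tr[SWAP ((1/|G|) Σ_{g∈G} (U(g)∘N) ⊗ (N∘U(g)))(SWAP)]. -/
open Matrix Kronecker BigOperators

/-- The swap operator `SWAP = ∑_{i,j} |i⟩⟨j| ⊗ |j⟩⟨i|` on `ℂ^d ⊗ ℂ^d`. -/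
noncomputable def swapOp (d : ℕ) : Matrix (Fin d × Fin d) (Fin d × Fin d) ℂ :=
  ∑ i, ∑ j, (Matrix.single i j (1 : ℂ)) ⊗ₖ (Matrix.single j i (1 : ℂ))

/-- The maximally entangled state `Φ^d = (1/d) ∑_{i,j} |i⟩⟨j| ⊗ |i⟩⟨j|`. -/
noncomputable def maxEnt (d : ℕ) : Matrix (Fin d × Fin d) (Fin d × Fin d) ℂ :=
  (1 / (d : ℂ)) • ∑ i, ∑ j, (Matrix.single i j (1 : ℂ)) ⊗ₖ (Matrix.single i j (1 : ℂ))

/-- The tensor product `N ⊗ M` of two superoperators, applied to a matrix on the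
tensor-product space (defined via the expansion in matrix units). -/
noncomputable def superKron {d : ℕ}
    (N M : Matrix (Fin d) (Fin d) ℂ →ₗ[ℂ] Matrix (Fin d) (Fin d) ℂ)
    (X : Matrix (Fin d × Fin d) (Fin d × Fin d) ℂ) :
    Matrix (Fin d × Fin d) (Fin d × Fin d) ℂ :=
  ∑ a, ∑ b, ∑ c, ∑ e, X (a, c) (b, e) •
    (N (Matrix.single a b 1) ⊗ₖ M (Matrix.single c e 1))

/-- The Choi state `Φ^N = (id ⊗ N)(Φ^d)` of a superoperator `N`. -/
noncomputable def choi {d : ℕ}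
    (N : Matrix (Fin d) (Fin d) ℂ →ₗ[ℂ] Matrix (Fin d) (Fin d) ℂ) :
    Matrix (Fin d × Fin d) (Fin d × Fin d) ℂ :=
  superKron LinearMap.id N (maxEnt d)

/-- The unitary channel `X ↦ U X U†`. -/
noncomputable def uchan {d : ℕ} (U : Matrix (Fin d) (Fin d) ℂ) :
    Matrix (Fin d) (Fin d) ℂ →ₗ[ℂ] Matrix (Fin d) (Fin d) ℂ where
  toFun X := U * X * Uᴴ
  map_add' X Y := by simp [Matrix.mul_add, Matrix.add_mul]
  map_smul' c X := by simp [Matrix.mul_smul, Matrix.smul_mul]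

/-- The Hilbert–Schmidt norm `‖A‖₂ = √Tr[A†A]`. -/
noncomputable def hsNorm {n : Type*} [Fintype n] (A : Matrix n n ℂ) : ℝ :=
  Real.sqrt ((Aᴴ * A).trace).re

open scoped ComplexOrder

namespace ChannelAsymAux

open Matrix Kronecker

variable {d : ℕ}

lemma trace_E_mul (i j : Fin d) (X : Matrix (Fin d) (Fin d) ℂ) :
    (Matrix.single i j (1:ℂ) * X).trace = X j i := by
  simp [Matrix.trace, Matrix.diag, Matrix.mul_apply, Matrix.single, Matrix.of_apply,
    ite_and, ite_mul, one_mul, zero_mul, Finset.sum_ite_eq]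

lemma sum_comm4 {M : Type*} [AddCommMonoid M] (f : Fin d → Fin d → Fin d → Fin d → M) :
    ∑ i, ∑ j, ∑ k, ∑ l, f i j k l = ∑ k, ∑ l, ∑ i, ∑ j, f i j k l := by
  have h1 : ∀ i, ∑ j, ∑ k, ∑ l, f i j k l = ∑ k, ∑ l, ∑ j, f i j k l := by
    intro i
    rw [Finset.sum_comm]
    exact Finset.sum_congr rfl fun k _ => Finset.sum_comm
  simp_rw [h1]
  rw [Finset.sum_comm]
  exact Finset.sum_congr rfl fun k _ => Finset.sum_comm

lemma trace_mul_expand {n : Type*} [Fintype n] (X Y : Matrix n n ℂ) :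
    (X * Y).trace = ∑ a, ∑ b, X a b * Y b a := by
  simp [Matrix.trace, Matrix.diag, Matrix.mul_apply]

lemma conjTranspose_kron (X Y : Matrix (Fin d) (Fin d) ℂ) :
    (X ⊗ₖ Y)ᴴ = Xᴴ ⊗ₖ Yᴴ := by
  ext ⟨a,c⟩ ⟨b,e⟩
  simp [Matrix.conjTranspose_apply, Matrix.kroneckerMap_apply]

lemma E_conjTranspose (i j : Fin d) :
    (Matrix.single i j (1:ℂ))ᴴ = Matrix.single j i 1 := by
  ext a b
  simp [Matrix.conjTranspose_apply, Matrix.single, Matrix.of_apply, and_comm]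

lemma swapOp_apply (a c b e : Fin d) :
    swapOp d (a, c) (b, e) = if a = e ∧ c = b then 1 else 0 := by
  simp [swapOp, Matrix.sum_apply, Matrix.kroneckerMap_apply, Matrix.single,
    Matrix.of_apply, ite_and, ite_mul, one_mul, zero_mul, mul_ite, mul_one, mul_zero,
    Finset.sum_ite_eq, Finset.sum_ite_eq', eq_comm]

lemma maxEnt_apply (a c b e : Fin d) :
    maxEnt d (a, c) (b, e) = (1/(d:ℂ)) * if a = c ∧ b = e then 1 else 0 := by
  simp [maxEnt, Matrix.sum_apply, Matrix.kroneckerMap_apply, Matrix.single,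
    Matrix.of_apply, ite_and, ite_mul, one_mul, zero_mul, mul_ite, mul_one, mul_zero,
    Finset.sum_ite_eq, Finset.sum_ite_eq', eq_comm]

lemma superKron_swapOp (A B : Matrix (Fin d) (Fin d) ℂ →ₗ[ℂ] Matrix (Fin d) (Fin d) ℂ) :
    superKron A B (swapOp d)
      = ∑ i, ∑ j, A (Matrix.single i j 1) ⊗ₖ B (Matrix.single j i 1) := by
  unfold superKron
  simp only [swapOp_apply, ite_smul, one_smul, zero_smul, ite_and]
  simp [Finset.sum_ite_eq, Finset.sum_ite_eq']

lemma superKron_maxEnt (A B : Matrix (Fin d) (Fin d) ℂ →ₗ[ℂ] Matrix (Fin d) (Fin d) ℂ) :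
    superKron A B (maxEnt d)
      = (1/(d:ℂ)) • ∑ i, ∑ j, A (Matrix.single i j 1) ⊗ₖ B (Matrix.single i j 1) := by
  unfold superKron
  simp only [maxEnt_apply, mul_ite, mul_one, mul_zero, ite_smul, zero_smul, ite_and,
    Finset.smul_sum]
  simp [Finset.sum_ite_eq, Finset.sum_ite_eq']

lemma swapTrace (A B : Matrix (Fin d) (Fin d) ℂ →ₗ[ℂ] Matrix (Fin d) (Fin d) ℂ) :
    (swapOp d * superKron A B (swapOp d)).trace
      = ∑ k, ∑ l, (A (Matrix.single k l 1) * B (Matrix.single l k 1)).trace := by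
  rw [superKron_swapOp]
  unfold swapOp
  simp only [Finset.sum_mul, Finset.mul_sum, Matrix.trace_sum, ← Matrix.mul_kronecker_mul,
    Matrix.trace_kronecker, trace_E_mul]
  refine Finset.sum_congr rfl fun k _ => Finset.sum_congr rfl fun l _ => ?_
  rw [trace_mul_expand, Finset.sum_comm]

lemma hsNorm_sq {n : Type*} [Fintype n] (A : Matrix n n ℂ) :
    ((hsNorm A : ℝ) : ℂ)^2 = (Aᴴ * A).trace := by
  have h : (Aᴴ * A).trace = ((∑ i, ∑ j, Complex.normSq (A j i) : ℝ) : ℂ) := by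
    rw [trace_mul_expand]
    push_cast
    refine Finset.sum_congr rfl fun i _ => Finset.sum_congr rfl fun j _ => ?_
    rw [Matrix.conjTranspose_apply]
    simp [Complex.normSq_eq_conj_mul_self, Complex.star_def]
  have hnn : (0:ℝ) ≤ ∑ i, ∑ j, Complex.normSq (A j i) :=
    Finset.sum_nonneg fun i _ => Finset.sum_nonneg fun j _ => Complex.normSq_nonneg _
  rw [h]
  have h2 : hsNorm A = Real.sqrt (∑ i, ∑ j, Complex.normSq (A j i)) := by
    rw [hsNorm, h]
    norm_cast
  rw [h2]
  norm_cast
  exact Real.sq_sqrt hnn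

lemma choiTrace (A B : Matrix (Fin d) (Fin d) ℂ →ₗ[ℂ] Matrix (Fin d) (Fin d) ℂ) :
    ((superKron LinearMap.id A (maxEnt d))ᴴ * superKron LinearMap.id B (maxEnt d)).trace
      = (1/(d:ℂ))^2 * ∑ i, ∑ j,
          ((A (Matrix.single i j 1))ᴴ * B (Matrix.single i j 1)).trace := by
  rw [superKron_maxEnt, superKron_maxEnt]
  simp only [LinearMap.id_coe, id_eq, Matrix.conjTranspose_smul, Matrix.conjTranspose_sum,
    conjTranspose_kron, E_conjTranspose, Matrix.smul_mul, Matrix.mul_smul, smul_smul,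
    Matrix.trace_smul, Finset.sum_mul, Finset.mul_sum, Matrix.trace_sum,
    ← Matrix.mul_kronecker_mul, Matrix.trace_kronecker, trace_E_mul, smul_eq_mul]
  simp [Matrix.single, Matrix.of_apply, ite_and, mul_ite, mul_zero, mul_one, ite_mul,
    zero_mul, Finset.sum_ite_eq, Finset.sum_ite_eq', one_div, star_inv₀, star_natCast, pow_two,
    mul_assoc]

lemma choiTrace_herm (A B : Matrix (Fin d) (Fin d) ℂ →ₗ[ℂ] Matrix (Fin d) (Fin d) ℂ)
    (hA : ∀ i j, (A (Matrix.single i j 1))ᴴ = A (Matrix.single j i 1)) :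
    ((superKron LinearMap.id A (maxEnt d))ᴴ * superKron LinearMap.id B (maxEnt d)).trace
      = (1/(d:ℂ))^2 * ∑ i, ∑ j,
          (A (Matrix.single i j 1) * B (Matrix.single j i 1)).trace := by
  rw [choiTrace]
  congr 1
  conv_lhs => rw [Finset.sum_comm]
  refine Finset.sum_congr rfl fun a _ => Finset.sum_congr rfl fun b _ => ?_
  rw [hA]

lemma superKron_sub (Nl M₁ M₂ : Matrix (Fin d) (Fin d) ℂ →ₗ[ℂ] Matrix (Fin d) (Fin d) ℂ)
    (X : Matrix (Fin d × Fin d) (Fin d × Fin d) ℂ) :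
    superKron Nl (M₁ - M₂) X = superKron Nl M₁ X - superKron Nl M₂ X := by
  ext ⟨a,c⟩ ⟨b,e⟩
  simp [superKron, Matrix.sum_apply, Matrix.sub_apply, Matrix.smul_apply,
    Matrix.kroneckerMap_apply, LinearMap.sub_apply, mul_sub, smul_eq_mul,
    Finset.sum_sub_distrib]

lemma uchan_apply (V X : Matrix (Fin d) (Fin d) ℂ) : uchan V X = V * X * Vᴴ := rfl

lemma conj_basis_apply (V : Matrix (Fin d) (Fin d) ℂ) (i j a b : Fin d) :
    (V * Matrix.single i j (1:ℂ) * Vᴴ) a b = V a i * star (V b j) := by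
  simp [Matrix.mul_apply, Matrix.single, Matrix.of_apply, Matrix.conjTranspose_apply,
    ite_and, mul_ite, mul_zero, mul_one, ite_mul, zero_mul, Finset.sum_ite_eq,
    Finset.sum_ite_eq']

lemma swap_conj (V : Matrix (Fin d) (Fin d) ℂ) (hV : V * Vᴴ = 1) :
    (∑ i, ∑ j, (V * Matrix.single i j (1:ℂ) * Vᴴ)
        ⊗ₖ (V * Matrix.single j i (1:ℂ) * Vᴴ)) = swapOp d := by
  ext ⟨a,c⟩ ⟨b,e⟩
  rw [swapOp_apply]
  have hae : ∑ i, V a i * star (V e i) = (1 : Matrix (Fin d) (Fin d) ℂ) a e := by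
    rw [← hV]; simp [Matrix.mul_apply, Matrix.conjTranspose_apply]
  have hcb : ∑ j, V c j * star (V b j) = (1 : Matrix (Fin d) (Fin d) ℂ) c b := by
    rw [← hV]; simp [Matrix.mul_apply, Matrix.conjTranspose_apply]
  have key : (∑ i, V a i * star (V e i)) * (∑ j, V c j * star (V b j))
      = if a = e ∧ c = b then 1 else 0 := by
    rw [hae, hcb]
    by_cases h1 : a = e <;> by_cases h2 : c = b <;>
      simp [Matrix.one_apply, h1, h2]
  rw [← key, Finset.sum_mul_sum]
  simp only [Matrix.sum_apply, Matrix.kroneckerMap_apply, conj_basis_apply]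
  refine Finset.sum_congr rfl fun i _ => Finset.sum_congr rfl fun j _ => ?_
  ring

lemma N_expand (Nl : Matrix (Fin d) (Fin d) ℂ →ₗ[ℂ] Matrix (Fin d) (Fin d) ℂ)
    (A : Matrix (Fin d) (Fin d) ℂ) :
    Nl A = ∑ a, ∑ b, A a b • Nl (Matrix.single a b 1) := by
  conv_lhs => rw [Matrix.matrix_eq_sum_single A]
  rw [map_sum]
  refine Finset.sum_congr rfl fun a _ => ?_
  rw [map_sum]
  refine Finset.sum_congr rfl fun b _ => ?_
  rw [show Matrix.single a b (A a b) = A a b • Matrix.single a b (1:ℂ) by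
    rw [Matrix.smul_single, smul_eq_mul, mul_one], _root_.map_smul]

lemma trace_mul_NN (Nl : Matrix (Fin d) (Fin d) ℂ →ₗ[ℂ] Matrix (Fin d) (Fin d) ℂ)
    (A B : Matrix (Fin d) (Fin d) ℂ) :
    (Nl A * Nl B).trace = ∑ a, ∑ b, ∑ c, ∑ e, A a b * B c e *
      (Nl (Matrix.single a b 1) * Nl (Matrix.single c e 1)).trace := by
  conv_lhs => rw [N_expand Nl A, N_expand Nl B]
  simp only [Finset.sum_mul, Finset.mul_sum, Matrix.smul_mul, Matrix.mul_smul, smul_smul,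
    Matrix.trace_sum, Matrix.trace_smul, smul_eq_mul]
  rw [sum_comm4]
  refine Finset.sum_congr rfl fun a _ => Finset.sum_congr rfl fun b _ =>
    Finset.sum_congr rfl fun c _ => Finset.sum_congr rfl fun e _ => ?_
  ring

/-- the quadratic form `X ↦ ∑ X entries * traces`. -/
noncomputable def Fphi (Nl : Matrix (Fin d) (Fin d) ℂ →ₗ[ℂ] Matrix (Fin d) (Fin d) ℂ)
    (X : Matrix (Fin d × Fin d) (Fin d × Fin d) ℂ) : ℂ :=
  ∑ p : (Fin d × Fin d) × (Fin d × Fin d), X (p.1.1, p.2.1) (p.1.2, p.2.2) *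
    (Nl (Matrix.single p.1.1 p.1.2 1) * Nl (Matrix.single p.2.1 p.2.2 1)).trace

lemma Fphi_kron (Nl : Matrix (Fin d) (Fin d) ℂ →ₗ[ℂ] Matrix (Fin d) (Fin d) ℂ)
    (A B : Matrix (Fin d) (Fin d) ℂ) :
    Fphi Nl (A ⊗ₖ B) = (Nl A * Nl B).trace := by
  unfold Fphi
  rw [trace_mul_NN]
  simp only [Fintype.sum_prod_type, Matrix.kroneckerMap_apply]

lemma Fphi_sum (Nl : Matrix (Fin d) (Fin d) ℂ →ₗ[ℂ] Matrix (Fin d) (Fin d) ℂ)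
    (f : Fin d → Fin d → Matrix (Fin d × Fin d) (Fin d × Fin d) ℂ) :
    Fphi Nl (∑ i, ∑ j, f i j) = ∑ i, ∑ j, Fphi Nl (f i j) := by
  simp only [Fphi, Matrix.sum_apply, Finset.sum_mul]
  rw [Finset.sum_comm]
  exact Finset.sum_congr rfl fun i _ => Finset.sum_comm

lemma conj_trace_cancel (V : Matrix (Fin d) (Fin d) ℂ) (hV : Vᴴ * V = 1)
    (A B : Matrix (Fin d) (Fin d) ℂ) :
    (V * A * Vᴴ * (V * B * Vᴴ)).trace = (A * B).trace := by
  have h1 : V * A * Vᴴ * (V * B * Vᴴ) = V * (A * B) * Vᴴ := by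
    calc V * A * Vᴴ * (V * B * Vᴴ) = V * (A * ((Vᴴ * V) * (B * Vᴴ))) := by
          simp only [Matrix.mul_assoc]
      _ = V * (A * B) * Vᴴ := by rw [hV, Matrix.one_mul]; simp only [Matrix.mul_assoc]
  rw [h1, Matrix.trace_mul_cycle, ← Matrix.mul_assoc, hV, Matrix.one_mul]

lemma sum_trace_conj_right (Nl : Matrix (Fin d) (Fin d) ℂ →ₗ[ℂ] Matrix (Fin d) (Fin d) ℂ)
    (V : Matrix (Fin d) (Fin d) ℂ) (hV2 : V * Vᴴ = 1) :
    ∑ i, ∑ j, (Nl (V * Matrix.single i j 1 * Vᴴ) *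
        Nl (V * Matrix.single j i 1 * Vᴴ)).trace
      = ∑ i, ∑ j, (Nl (Matrix.single i j 1) * Nl (Matrix.single j i 1)).trace := by
  have h1 : ∑ i, ∑ j, (Nl (V * Matrix.single i j 1 * Vᴴ) *
        Nl (V * Matrix.single j i 1 * Vᴴ)).trace
      = Fphi Nl (∑ i, ∑ j, (V * Matrix.single i j (1:ℂ) * Vᴴ)
          ⊗ₖ (V * Matrix.single j i (1:ℂ) * Vᴴ)) := by
    rw [Fphi_sum]
    exact Finset.sum_congr rfl fun i _ => Finset.sum_congr rfl fun j _ => (Fphi_kron _ _ _).symm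
  have h2 : ∑ i, ∑ j, (Nl (Matrix.single i j (1:ℂ)) *
        Nl (Matrix.single j i 1)).trace = Fphi Nl (swapOp d) := by
    unfold swapOp
    rw [Fphi_sum]
    exact Finset.sum_congr rfl fun i _ => Finset.sum_congr rfl fun j _ => (Fphi_kron _ _ _).symm
  rw [h1, swap_conj V hV2]
  exact h2.symm

lemma choi_apply' (Nl : Matrix (Fin d) (Fin d) ℂ →ₗ[ℂ] Matrix (Fin d) (Fin d) ℂ)
    (i k j l : Fin d) :
    choi Nl (i,k) (j,l) = (1/(d:ℂ)) * Nl (Matrix.single i j 1) k l := by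
  rw [choi, superKron_maxEnt]
  simp [Matrix.smul_apply, Matrix.sum_apply, Matrix.kroneckerMap_apply, Matrix.single,
    Matrix.of_apply, ite_and, ite_mul, one_mul, zero_mul, Finset.sum_ite_eq, smul_eq_mul]

end ChannelAsymAux

open ChannelAsymAux in
/-- for a channel `N` and a finite family of unitary channels `U(g)`,
`(1/|G|) Σ_g ‖(id ⊗ [U(g), N])(Φ^d)‖₂² = (2/d²) Tr[SWAP (N⊗N)(SWAP)]
  − (2/d²) Tr[SWAP ((1/|G|) Σ_g (U(g)∘N) ⊗ (N∘U(g)))(SWAP)]`. -/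
theorem channel_asymmetry_measure_eq (d : ℕ) (G : Type*) [Group G] [Fintype G]
    (N : Matrix (Fin d) (Fin d) ℂ →ₗ[ℂ] Matrix (Fin d) (Fin d) ℂ)
    (hTP : ∀ X, (N X).trace = X.trace) (hCP : (choi N).PosSemidef)
    (U : G → Matrix (Fin d) (Fin d) ℂ)
    (hU : ∀ g, U g ∈ Matrix.unitaryGroup (Fin d) ℂ) :
    ((1 / (Fintype.card G : ℂ)) * ∑ g,
        ((hsNorm (superKron LinearMap.id ((uchan (U g)).comp N - N.comp (uchan (U g)))
          (maxEnt d))) ^ 2 : ℂ))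
      = (2 / (d : ℂ) ^ 2) * (swapOp d * superKron N N (swapOp d)).trace
        - (2 / (d : ℂ) ^ 2) *
          (swapOp d * ((1 / (Fintype.card G : ℂ)) • ∑ g,
            superKron ((uchan (U g)).comp N) (N.comp (uchan (U g))) (swapOp d))).trace := by
  classical
  -- Hermiticity-preservation of N, from complete positivity
  have key : ∀ i j k l : Fin d, star (N (Matrix.single j i (1:ℂ)) l k)
      = N (Matrix.single i j 1) k l := by
    intro i j k l
    have hd : (d:ℂ) ≠ 0 := Nat.cast_ne_zero.mpr i.pos.ne'
    have h1 : star (choi N (j,l) (i,k)) = choi N (i,k) (j,l) := by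
      conv_rhs => rw [← hCP.1]
      rw [Matrix.conjTranspose_apply]
    rw [choi_apply', choi_apply', star_mul'] at h1
    have hstar : star (1/(d:ℂ)) = 1/(d:ℂ) := by simp
    rw [hstar] at h1
    exact mul_left_cancel₀ (one_div_ne_zero hd) h1
  have hermN : ∀ i j : Fin d, (N (Matrix.single i j (1:ℂ)))ᴴ
      = N (Matrix.single j i 1) := by
    intro i j
    ext k l
    rw [Matrix.conjTranspose_apply]
    exact key j i k l
  have hermNX : ∀ X, (N X)ᴴ = N Xᴴ := by
    intro X
    rw [N_expand N X, N_expand N Xᴴ]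
    simp only [Matrix.conjTranspose_sum, Matrix.conjTranspose_smul, hermN,
      Matrix.conjTranspose_apply]
    rw [Finset.sum_comm]
  -- unitarity facts
  have hV1 : ∀ g, (U g)ᴴ * U g = 1 := by
    intro g
    have := Matrix.mem_unitaryGroup_iff'.mp (hU g)
    rwa [Matrix.star_eq_conjTranspose] at this
  have hV2 : ∀ g, U g * (U g)ᴴ = 1 := by
    intro g
    have := Matrix.mem_unitaryGroup_iff.mp (hU g)
    rwa [Matrix.star_eq_conjTranspose] at this
  -- hermiticity of the composed maps
  have hermP : ∀ (g : G) i j, (((uchan (U g)).comp N) (Matrix.single i j (1:ℂ)))ᴴ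
      = ((uchan (U g)).comp N) (Matrix.single j i 1) := by
    intro g i j
    simp only [LinearMap.comp_apply, uchan_apply, Matrix.conjTranspose_mul,
      Matrix.conjTranspose_conjTranspose, hermN, Matrix.mul_assoc]
  have hermQ : ∀ (g : G) i j, ((N.comp (uchan (U g))) (Matrix.single i j (1:ℂ)))ᴴ
      = (N.comp (uchan (U g))) (Matrix.single j i 1) := by
    intro g i j
    simp only [LinearMap.comp_apply, uchan_apply]
    rw [hermNX]
    congr 1
    simp only [Matrix.conjTranspose_mul, Matrix.conjTranspose_conjTranspose, E_conjTranspose,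
      Matrix.mul_assoc]
  set SNN : ℂ := ∑ i, ∑ j, (N (Matrix.single i j 1) *
    N (Matrix.single j i 1)).trace with hSNNdef
  set SPQ : G → ℂ := fun g => ∑ i, ∑ j, (((uchan (U g)).comp N) (Matrix.single i j 1) *
    ((N.comp (uchan (U g))) (Matrix.single j i 1))).trace with hSPQdef
  -- the per-element norm identity
  have normg : ∀ g : G,
      ((hsNorm (superKron LinearMap.id ((uchan (U g)).comp N - N.comp (uchan (U g)))
          (maxEnt d))) ^ 2 : ℂ)
        = (1/(d:ℂ))^2 * (2 * SNN - 2 * SPQ g) := by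
    intro g
    rw [hsNorm_sq, superKron_sub, Matrix.conjTranspose_sub, Matrix.sub_mul, Matrix.mul_sub,
      Matrix.mul_sub, Matrix.trace_sub, Matrix.trace_sub, Matrix.trace_sub,
      choiTrace_herm _ _ (hermP g), choiTrace_herm _ _ (hermP g),
      choiTrace_herm _ _ (hermQ g), choiTrace_herm _ _ (hermQ g)]
    have hPP : (∑ i, ∑ j, (((uchan (U g)).comp N) (Matrix.single i j 1) *
        ((uchan (U g)).comp N) (Matrix.single j i 1)).trace) = SNN := by
      rw [hSNNdef]
      refine Finset.sum_congr rfl fun i _ => Finset.sum_congr rfl fun j _ => ?_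
      simp only [LinearMap.comp_apply, uchan_apply]
      exact conj_trace_cancel (U g) (hV1 g) _ _
    have hQQ : (∑ i, ∑ j, ((N.comp (uchan (U g))) (Matrix.single i j 1) *
        (N.comp (uchan (U g))) (Matrix.single j i 1)).trace) = SNN := by
      rw [hSNNdef]
      simp only [LinearMap.comp_apply, uchan_apply]
      exact sum_trace_conj_right N (U g) (hV2 g)
    have hQP : (∑ i, ∑ j, ((N.comp (uchan (U g))) (Matrix.single i j 1) *
        ((uchan (U g)).comp N) (Matrix.single j i 1)).trace) = SPQ g := by
      rw [hSPQdef]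
      rw [Finset.sum_comm]
      exact Finset.sum_congr rfl fun a _ => Finset.sum_congr rfl fun b _ =>
        Matrix.trace_mul_comm _ _
    rw [hPP, hQQ, hQP]
    rw [show (∑ i, ∑ j, (((uchan (U g)).comp N) (Matrix.single i j 1) *
        ((N.comp (uchan (U g))) (Matrix.single j i 1))).trace) = SPQ g from rfl]
    ring
  -- rewrite both sides
  have hc : (Fintype.card G : ℂ) ≠ 0 := Nat.cast_ne_zero.mpr Fintype.card_ne_zero
  have hLsum : (∑ g : G, ((hsNorm (superKron LinearMap.id
        ((uchan (U g)).comp N - N.comp (uchan (U g))) (maxEnt d))) ^ 2 : ℂ))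
      = (Fintype.card G : ℂ) * ((2/(d:ℂ)^2) * SNN) - (2/(d:ℂ)^2) * ∑ g, SPQ g := by
    rw [Finset.sum_congr rfl fun g _ => normg g]
    have hg : ∀ g : G, (1/(d:ℂ))^2 * (2 * SNN - 2 * SPQ g)
        = (2/(d:ℂ)^2) * SNN - (2/(d:ℂ)^2) * SPQ g := fun g => by ring
    rw [Finset.sum_congr rfl fun g _ => hg g, Finset.sum_sub_distrib, Finset.sum_const,
      Finset.card_univ, nsmul_eq_mul, ← Finset.mul_sum]
  rw [hLsum]
  rw [swapTrace N N]
  rw [Matrix.mul_smul, Matrix.trace_smul, Matrix.mul_sum, Matrix.trace_sum]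
  rw [Finset.sum_congr rfl fun g (_ : g ∈ Finset.univ) => swapTrace ((uchan (U g)).comp N)
    (N.comp (uchan (U g)))]
  rw [show (∑ i, ∑ j, (N (Matrix.single i j 1) *
      N (Matrix.single j i 1)).trace) = SNN from rfl]
  rw [show (∑ g : G, ∑ i, ∑ j, (((uchan (U g)).comp N) (Matrix.single i j 1) *
      ((N.comp (uchan (U g))) (Matrix.single j i 1))).trace) = ∑ g, SPQ g from rfl]
  rw [smul_eq_mul, mul_sub]
  congr 1
  · rw [← mul_assoc, one_div, inv_mul_cancel₀ hc, one_mul]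
  · ring
end

section
/- For the single-qubit amplitude damping channel D_γ with Kraus operators K₀ = |0⟩⟨0| + √(1−γ)|1⟩⟨1| and K₁ = √γ |0⟩⟨1|, the X-asymmetry measure (1/2)‖Φ^{X∘D_γ} − Φ^{D_γ∘X}‖₂² equals γ²/2, where X is the Pauli-X unitary channel and Φ^M denotes the Choi state of M. -/
open Matrix Kronecker BigOperators

/-- Kraus operator `K₀ = |0⟩⟨0| + √(1−γ)|1⟩⟨1|` of the amplitude damping channel. -/
noncomputable def K0 (γ : ℝ) : Matrix (Fin 2) (Fin 2) ℂ :=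
  !![1, 0; 0, (Real.sqrt (1 - γ) : ℂ)]

/-- Kraus operator `K₁ = √γ |0⟩⟨1|` of the amplitude damping channel. -/
noncomputable def K1 (γ : ℝ) : Matrix (Fin 2) (Fin 2) ℂ :=
  !![0, (Real.sqrt γ : ℂ); 0, 0]

/-- The amplitude damping channel `D_γ(ρ) = K₀ρK₀† + K₁ρK₁†`. -/
noncomputable def ampDamp (γ : ℝ) :
    Matrix (Fin 2) (Fin 2) ℂ →ₗ[ℂ] Matrix (Fin 2) (Fin 2) ℂ where
  toFun ρ := K0 γ * ρ * (K0 γ)ᴴ + K1 γ * ρ * (K1 γ)ᴴ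
  map_add' X Y := by simp [Matrix.mul_add, Matrix.add_mul]; abel
  map_smul' c X := by simp [Matrix.mul_smul, Matrix.smul_mul, smul_add]

/-- The Pauli-X matrix. -/
def pauliX : Matrix (Fin 2) (Fin 2) ℂ := !![0, 1; 1, 0]

/-- The Pauli-Z matrix. -/
def pauliZ : Matrix (Fin 2) (Fin 2) ℂ := !![1, 0; 0, -1]

lemma choi_apply (N : Matrix (Fin 2) (Fin 2) ℂ →ₗ[ℂ] Matrix (Fin 2) (Fin 2) ℂ)
    (a c b e : Fin 2) :
    choi N (a, c) (b, e) = (1/2 : ℂ) * N (Matrix.single a b 1) c e := by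
  fin_cases a <;> fin_cases b <;>
    simp [choi, superKron, maxEnt, Matrix.sum_apply, Matrix.smul_apply,
      Matrix.kroneckerMap_apply, Fin.sum_univ_two, Matrix.single]

set_option maxHeartbeats 2000000 in
lemma diff_apply (γ : ℝ) (hγ0 : 0 ≤ γ) (hγ1 : γ ≤ 1) (a b c e : Fin 2) :
    ((uchan pauliX).comp (ampDamp γ)) (Matrix.single a b 1) c e
      - ((ampDamp γ).comp (uchan pauliX)) (Matrix.single a b 1) c e
    = if a = b ∧ c = e then (if c = 0 then -(γ:ℂ) else γ) else 0 := by
  have h1 : (Real.sqrt γ : ℂ) ^ 2 = (γ : ℂ) := by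
    rw [← Complex.ofReal_pow, Real.sq_sqrt hγ0]
  have h2 : (Real.sqrt (1 - γ) : ℂ) ^ 2 = 1 - (γ : ℂ) := by
    rw [← Complex.ofReal_pow, Real.sq_sqrt (by linarith)]
    push_cast; ring
  have h1' : (Real.sqrt γ : ℂ) * (Real.sqrt γ : ℂ) = (γ : ℂ) := by rw [← pow_two]; exact h1
  have h2' : (Real.sqrt (1 - γ) : ℂ) * (Real.sqrt (1 - γ) : ℂ) = 1 - (γ : ℂ) := by
    rw [← pow_two]; exact h2
  fin_cases a <;> fin_cases b <;> fin_cases c <;> fin_cases e <;>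
    · simp only [LinearMap.comp_apply, uchan, ampDamp, LinearMap.coe_mk, AddHom.coe_mk,
        Matrix.add_apply, Matrix.mul_apply, Matrix.conjTranspose_apply, Fin.sum_univ_two,
        Matrix.single, Matrix.of_apply, Matrix.cons_val', Matrix.cons_val_zero,
        Matrix.cons_val_one, Matrix.head_cons, Matrix.head_fin_const, Complex.conj_ofReal,
        map_zero, _root_.map_one, pauliX, K0, K1]
      norm_num [h1, h2, h1', h2']

/-- for the amplitude damping channel `D_γ`, the `X`-asymmetry measure
`(1/2)‖Φ^{X∘D_γ} − Φ^{D_γ∘X}‖₂²` equals `γ²/2`. -/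
theorem ampDamp_X_asymmetry (γ : ℝ) (hγ0 : 0 ≤ γ) (hγ1 : γ ≤ 1) :
    (1 / 2 : ℝ) * (hsNorm (choi ((uchan pauliX).comp (ampDamp γ))
        - choi ((ampDamp γ).comp (uchan pauliX)))) ^ 2
      = γ ^ 2 / 2 := by
  set A := choi ((uchan pauliX).comp (ampDamp γ))
      - choi ((ampDamp γ).comp (uchan pauliX)) with hAdef
  have hA : ∀ a c b e : Fin 2, A (a, c) (b, e)
      = (1/2 : ℂ) * (if a = b ∧ c = e then (if c = 0 then -(γ:ℂ) else γ) else 0) := by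
    intro a c b e
    rw [hAdef, Matrix.sub_apply, choi_apply, choi_apply, ← mul_sub,
      diff_apply γ hγ0 hγ1]
  have key : (((Aᴴ * A).trace).re) = γ ^ 2 := by
    simp only [Matrix.trace, Matrix.diag_apply, Matrix.mul_apply,
      Matrix.conjTranspose_apply, Fintype.sum_prod_type, Fin.sum_univ_two, hA]
    norm_num [Complex.conj_ofReal]
    ring
  rw [hsNorm, key, Real.sq_sqrt (sq_nonneg γ)]
  ring
end
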